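/- Let f, g : 2^ω → ℝ with g Baire 1, let p, q be rationals, ε, δ positive rationals, and let k : 2^ω → 2^ω be continuous, such that for every A ∈ 2^ω and every bit b, if b is a correct answer to 'g(k(A)) ≲_δ q' then b is a correct answer to 'f(A) ≲_ε p'. Then P^ν_{f,p,ε} ⊆ k⁻¹(P^ν_{g,q,δ}) for every ordinal ν; in particular the sequence (P^ν_{f,p,ε}) reaches the empty set and α(f,p,ε) ≤ α(g,q,δ). Consequently, if f is also Baire 1 and f ≤_m g, then |f|_α ≤ |g|_α. -/

import Mathlib

/-- Cantor space `2^ω`. -/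
abbrev Cantor : Type := ℕ → Bool

/-- A bit `b` is a correct answer to the question `f A ≲_ε p`. -/
def CorrectAnswer (f : Cantor → ℝ) (A : Cantor) (p ε : ℚ) (b : Bool) : Prop :=
  (b = true ∧ f A < (p : ℝ) + (ε : ℝ)) ∨ (b = false ∧ (p : ℝ) - (ε : ℝ) < f A)

/-- Topological m-reducibility `f ≤_m g`. -/
def MReducible (f g : Cantor → ℝ) : Prop :=
  ∀ p ε : ℚ, 0 < ε → ∃ q δ : ℚ, 0 < δ ∧ ∃ k : Cantor → Cantor, Continuous k ∧
    ∀ A b, CorrectAnswer g (k A) q δ b → CorrectAnswer f A p ε b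

/-- `f` is Baire class 1: a pointwise limit of continuous functions. -/
def BaireOne (f : Cantor → ℝ) : Prop :=
  ∃ F : ℕ → Cantor → ℝ, (∀ n, Continuous (F n)) ∧
    ∀ A, Filter.Tendsto (fun n => F n A) Filter.atTop (nhds (f A))

/-- The Bourgain derivation sequence `P^ν_{f,p,ε}`. -/
noncomputable def derivSeq (f : Cantor → ℝ) (p ε : ℚ) (ν : Ordinal.{0}) : Set Cantor :=
  Ordinal.limitRecOn ν Set.univ
    (fun _ P => P \ ⋃₀ {U : Set Cantor | IsOpen U ∧
        (f '' (P ∩ U) ⊆ Set.Iio ((p : ℝ) + (ε : ℝ)) ∨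
         f '' (P ∩ U) ⊆ Set.Ioi ((p : ℝ) - (ε : ℝ)))})
    (fun o _ ih => ⋂ (μ : {μ : Ordinal.{0} // μ < o}), ih μ.1 μ.2)

/-- `α(f,p,ε)`: the least ordinal `ν` with `P^ν_{f,p,ε} = ∅`. -/
noncomputable def bAlpha (f : Cantor → ℝ) (p ε : ℚ) : Ordinal.{0} :=
  sInf {ν | derivSeq f p ε ν = ∅}

/-- The Bourgain rank `|f|_α`. -/
noncomputable def bourgainRank (f : Cantor → ℝ) : Ordinal.{0} :=
  ⨆ x : ℚ × {ε : ℚ // 0 < ε}, bAlpha f x.1 x.2.1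

open Set Filter

lemma derivSeq_zero (f : Cantor → ℝ) (p ε : ℚ) : derivSeq f p ε 0 = Set.univ :=
  Ordinal.limitRecOn_zero _ _ _

lemma derivSeq_succ (f : Cantor → ℝ) (p ε : ℚ) (ν : Ordinal.{0}) :
    derivSeq f p ε (Order.succ ν) =
      derivSeq f p ε ν \ ⋃₀ {U : Set Cantor | IsOpen U ∧
        (f '' (derivSeq f p ε ν ∩ U) ⊆ Set.Iio ((p : ℝ) + (ε : ℝ)) ∨
         f '' (derivSeq f p ε ν ∩ U) ⊆ Set.Ioi ((p : ℝ) - (ε : ℝ)))} :=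
  Ordinal.limitRecOn_succ _ _ _ _

lemma derivSeq_limit (f : Cantor → ℝ) (p ε : ℚ) {ν : Ordinal.{0}} (hν : Order.IsSuccLimit ν) :
    derivSeq f p ε ν = ⋂ (μ : {μ : Ordinal.{0} // μ < ν}), derivSeq f p ε μ.1 :=
  Ordinal.limitRecOn_limit _ _ _ _ hν

lemma derivSeq_anti (f : Cantor → ℝ) (p ε : ℚ) (ν : Ordinal.{0}) :
    ∀ μ ≤ ν, derivSeq f p ε ν ⊆ derivSeq f p ε μ := by
  induction ν using Ordinal.limitRecOn with
  | zero => intro μ hμ; rw [nonpos_iff_eq_zero.mp hμ]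
  | add_one ν IH =>
    rw [Ordinal.add_one_eq_succ]
    intro μ hμ
    rcases eq_or_lt_of_le hμ with rfl | hlt
    · exact subset_rfl
    · have hμν : μ ≤ ν := Order.lt_succ_iff.mp hlt
      rw [derivSeq_succ]
      exact Set.diff_subset.trans (IH μ hμν)
  | limit ν hν IH =>
    intro μ hμ
    rcases eq_or_lt_of_le hμ with rfl | hlt
    · exact subset_rfl
    · rw [derivSeq_limit f p ε hν]
      exact Set.iInter_subset (fun μ' : {μ' : Ordinal.{0} // μ' < ν} => derivSeq f p ε μ'.1)
        ⟨μ, hlt⟩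

lemma derivSeq_closed (f : Cantor → ℝ) (p ε : ℚ) (ν : Ordinal.{0}) :
    IsClosed (derivSeq f p ε ν) := by
  induction ν using Ordinal.limitRecOn with
  | zero => rw [derivSeq_zero]; exact isClosed_univ
  | add_one ν IH => rw [Ordinal.add_one_eq_succ, derivSeq_succ]; exact IH.sdiff (isOpen_sUnion fun U hU => hU.1)
  | limit ν hν IH =>
    rw [derivSeq_limit f p ε hν]
    exact isClosed_iInter fun μ => IH μ.1 μ.2

lemma exists_good_open (g : Cantor → ℝ) (hg : BaireOne g) (q δ : ℚ) (hδ : 0 < δ)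
    (P : Set Cantor) (hP : IsClosed P) (hne : P.Nonempty) :
    ∃ x ∈ P, ∃ U : Set Cantor, IsOpen U ∧ x ∈ U ∧
      (g '' (P ∩ U) ⊆ Set.Iio ((q : ℝ) + (δ : ℝ)) ∨
       g '' (P ∩ U) ⊆ Set.Ioi ((q : ℝ) - (δ : ℝ))) := by
  obtain ⟨F, hF, hFg⟩ := hg
  have hδR : (0:ℝ) < (δ:ℝ) := by exact_mod_cast hδ
  set c : ℝ := (δ:ℝ)/4 with hc
  have hc0 : 0 < c := by positivity
  haveI : Nonempty ↥P := hne.to_subtype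
  haveI : CompactSpace ↥P := isCompact_iff_compactSpace.mp hP.isCompact
  haveI : LocallyCompactSpace ↥P := inferInstance
  haveI : BaireSpace ↥P := inferInstance
  set E : ℕ → Set ↥P := fun n => {x | ∀ m, dist (F (m+n) ↑x) (F n ↑x) ≤ c} with hE
  have hEc : ∀ n, IsClosed (E n) := by
    intro n
    have : E n = ⋂ m, {x : ↥P | dist (F (m+n) ↑x) (F n ↑x) ≤ c} := by
      ext x; simp [hE, Set.mem_iInter]
    rw [this]
    exact isClosed_iInter fun m =>
      isClosed_le (((hF (m+n)).comp continuous_subtype_val).dist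
        ((hF n).comp continuous_subtype_val)) continuous_const
  have hEU : ⋃ n, E n = Set.univ := by
    ext x
    simp only [Set.mem_iUnion, Set.mem_univ, iff_true]
    obtain ⟨N, hN⟩ := (Metric.tendsto_atTop.mp (hFg ↑x)) (c/2) (by positivity)
    refine ⟨N, fun m => ?_⟩
    have h1 := hN (m+N) (Nat.le_add_left _ _)
    have h2 := hN N le_rfl
    calc dist (F (m+N) ↑x) (F N ↑x)
        ≤ dist (F (m+N) ↑x) (g ↑x) + dist (g ↑x) (F N ↑x) := dist_triangle _ _ _
      _ ≤ c/2 + c/2 := add_le_add h1.le (by rw [dist_comm]; exact h2.le)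
      _ = c := by ring
  obtain ⟨n, x₀, hx₀⟩ := nonempty_interior_of_iUnion_of_closed hEc hEU
  have hgE : ∀ x ∈ E n, dist (g ↑x) (F n ↑x) ≤ c := by
    intro x hx
    have ht : Filter.Tendsto (fun m => dist (F (m+n) ↑x) (F n ↑x)) atTop
        (nhds (dist (g ↑x) (F n ↑x))) :=
      Filter.Tendsto.dist ((hFg ↑x).comp (Filter.tendsto_add_atTop_nat n)) tendsto_const_nhds
    exact le_of_tendsto ht (Filter.Eventually.of_forall fun m => hx m)
  have hx₀E : x₀ ∈ E n := interior_subset hx₀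
  set V : Set ↥P := interior (E n) ∩ (fun x : ↥P => F n ↑x) ⁻¹' Metric.ball (F n ↑x₀) c with hV
  have hVopen : IsOpen V :=
    isOpen_interior.inter (Metric.isOpen_ball.preimage ((hF n).comp continuous_subtype_val))
  have hx₀V : x₀ ∈ V := ⟨hx₀, by simp [Metric.mem_ball, dist_self, hc0]⟩
  have hdist : ∀ y ∈ V, dist (g ↑y) (g ↑x₀) ≤ 3*c := by
    intro y hy
    have h1 : dist (g ↑y) (F n ↑y) ≤ c := hgE y (interior_subset hy.1)
    have h2 : dist (F n ↑y) (F n ↑x₀) ≤ c := (Metric.mem_ball.mp hy.2).le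
    have h3 : dist (F n ↑x₀) (g ↑x₀) ≤ c := by rw [dist_comm]; exact hgE x₀ hx₀E
    calc dist (g ↑y) (g ↑x₀) ≤ dist (g ↑y) (F n ↑y) + dist (F n ↑y) (g ↑x₀) := dist_triangle _ _ _
      _ ≤ c + (dist (F n ↑y) (F n ↑x₀) + dist (F n ↑x₀) (g ↑x₀)) :=
          add_le_add h1 (dist_triangle _ _ _)
      _ ≤ c + (c + c) := by linarith
      _ = 3*c := by ring
  obtain ⟨U, hUopen, hUV⟩ := isOpen_induced_iff.mp hVopen
  have key : ∀ z ∈ P ∩ U, dist (g z) (g ↑x₀) ≤ 3*c := by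
    rintro z ⟨hzP, hzU⟩
    have hz : (⟨z, hzP⟩ : ↥P) ∈ V := by rw [← hUV]; exact hzU
    exact hdist _ hz
  refine ⟨↑x₀, x₀.2, U, hUopen, ?_, ?_⟩
  · have : x₀ ∈ Subtype.val ⁻¹' U := by rw [hUV]; exact hx₀V
    exact this
  · have h3c : 3*c < (δ:ℝ) := by rw [hc]; linarith
    rcases le_or_gt (g ↑x₀) (q:ℝ) with hcase | hcase
    · left
      rintro _ ⟨z, hz, rfl⟩
      have := key z hz
      have habs := abs_le.mp (by rwa [Real.dist_eq] at this)
      simp only [Set.mem_Iio]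
      linarith [habs.2]
    · right
      rintro _ ⟨z, hz, rfl⟩
      have := key z hz
      have habs := abs_le.mp (by rwa [Real.dist_eq] at this)
      simp only [Set.mem_Ioi]
      linarith [habs.1]

lemma derivSeq_step (g : Cantor → ℝ) (hg : BaireOne g) (q δ : ℚ) (hδ : 0 < δ)
    {ν : Ordinal.{0}} (hne : (derivSeq g q δ ν).Nonempty) :
    ∃ x, x ∈ derivSeq g q δ ν ∧ x ∉ derivSeq g q δ (Order.succ ν) := by
  obtain ⟨x, hxP, U, hU, hxU, hcond⟩ :=
    exists_good_open g hg q δ hδ _ (derivSeq_closed g q δ ν) hne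
  refine ⟨x, hxP, ?_⟩
  rw [derivSeq_succ]
  rintro ⟨-, hmem⟩
  exact hmem ⟨U, ⟨hU, hcond⟩, hxU⟩

lemma derivSeq_exists_empty (g : Cantor → ℝ) (hg : BaireOne g) (q δ : ℚ) (hδ : 0 < δ) :
    ∃ ν : Ordinal.{0}, derivSeq g q δ ν = ∅ := by
  by_contra hcon
  push_neg at hcon
  have hne : ∀ ν, (derivSeq g q δ ν).Nonempty := hcon
  have key : ∀ μ ν : Ordinal.{0}, μ < ν → derivSeq g q δ μ ≠ derivSeq g q δ ν := by
    intro μ ν hlt hμν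
    obtain ⟨x, hx1, hx2⟩ := derivSeq_step g hg q δ hδ (hne μ)
    have hsub : derivSeq g q δ ν ⊆ derivSeq g q δ (Order.succ μ) :=
      derivSeq_anti g q δ ν _ (Order.succ_le_of_lt hlt)
    exact hx2 (hsub (hμν ▸ hx1))
  apply not_injective_of_ordinal (derivSeq g q δ)
  intro μ ν hμν
  rcases lt_trichotomy μ ν with hlt | heq | hlt
  · exact absurd hμν (key μ ν hlt)
  · exact heq
  · exact absurd hμν.symm (key ν μ hlt)

lemma derivSeq_mono_red (f g : Cantor → ℝ) (p q ε δ : ℚ) (k : Cantor → Cantor)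
    (hk : Continuous k)
    (h : ∀ A b, CorrectAnswer g (k A) q δ b → CorrectAnswer f A p ε b) :
    ∀ ν : Ordinal.{0}, derivSeq f p ε ν ⊆ k ⁻¹' derivSeq g q δ ν := by
  intro ν
  induction ν using Ordinal.limitRecOn with
  | zero => rw [derivSeq_zero, derivSeq_zero]; exact fun _ _ => Set.mem_univ _
  | add_one ν IH =>
    rw [Ordinal.add_one_eq_succ, derivSeq_succ, derivSeq_succ]
    rintro A ⟨hA, hAn⟩
    refine ⟨IH hA, ?_⟩
    rintro ⟨U, ⟨hU, hcond⟩, hkAU⟩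
    apply hAn
    refine ⟨k ⁻¹' U, ⟨hU.preimage hk, ?_⟩, hkAU⟩
    rcases hcond with hc | hc
    · left
      rintro _ ⟨B, ⟨hB1, hB2⟩, rfl⟩
      have hgkB : g (k B) < (q:ℝ) + (δ:ℝ) := hc ⟨k B, ⟨IH hB1, hB2⟩, rfl⟩
      rcases h B true (Or.inl ⟨rfl, hgkB⟩) with ⟨-, hlt⟩ | ⟨hff, -⟩
      · exact hlt
      · exact absurd hff (by simp)
    · right
      rintro _ ⟨B, ⟨hB1, hB2⟩, rfl⟩
      have hgkB : (q:ℝ) - (δ:ℝ) < g (k B) := hc ⟨k B, ⟨IH hB1, hB2⟩, rfl⟩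
      rcases h B false (Or.inr ⟨rfl, hgkB⟩) with ⟨htf, -⟩ | ⟨-, hlt⟩
      · exact absurd htf (by simp)
      · exact hlt
  | limit ν hν IH =>
    rw [derivSeq_limit f p ε hν, derivSeq_limit g q δ hν]
    intro A hA
    simp only [Set.mem_preimage, Set.mem_iInter] at *
    exact fun μ => IH μ.1 μ.2 (hA μ)

lemma alpha_main (f g : Cantor → ℝ) (hg : BaireOne g) (p q ε δ : ℚ) (hδ : 0 < δ)
    (k : Cantor → Cantor) (hk : Continuous k)
    (h : ∀ A b, CorrectAnswer g (k A) q δ b → CorrectAnswer f A p ε b) :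
    (∃ ν : Ordinal.{0}, derivSeq f p ε ν = ∅) ∧ bAlpha f p ε ≤ bAlpha g q δ := by
  have hsub := derivSeq_mono_red f g p q ε δ k hk h
  have hgempty := derivSeq_exists_empty g hg q δ hδ
  have hfe : ∀ ν, derivSeq g q δ ν = ∅ → derivSeq f p ε ν = ∅ := by
    intro ν hν
    apply Set.eq_empty_of_subset_empty
    have := hsub ν
    rwa [hν, Set.preimage_empty] at this
  obtain ⟨ν₀, hν₀⟩ := hgempty
  have hmem : bAlpha g q δ ∈ {ν : Ordinal.{0} | derivSeq g q δ ν = ∅} :=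
    csInf_mem (⟨ν₀, hν₀⟩ : Set.Nonempty {ν : Ordinal.{0} | derivSeq g q δ ν = ∅})
  exact ⟨⟨ν₀, hfe ν₀ hν₀⟩, csInf_le' (hfe _ hmem)⟩

/-- If a single-question reduction transfers correct answers about `g(k A) ≲_δ q` to
correct answers about `f A ≲_ε p`, then the derivation sequences compare:
`P^ν_{f,p,ε} ⊆ k⁻¹(P^ν_{g,q,δ})`, the sequence for `f` reaches `∅`,
`α(f,p,ε) ≤ α(g,q,δ)`; consequently if `f` is Baire 1 and `f ≤_m g` then
`|f|_α ≤ |g|_α`. -/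
theorem derivSeq_subset_of_reduction (f g : Cantor → ℝ) (hg : BaireOne g) (p q ε δ : ℚ)
    (hε : 0 < ε) (hδ : 0 < δ) (k : Cantor → Cantor) (hk : Continuous k)
    (h : ∀ A b, CorrectAnswer g (k A) q δ b → CorrectAnswer f A p ε b) :
    (∀ ν : Ordinal, derivSeq f p ε ν ⊆ k ⁻¹' derivSeq g q δ ν) ∧
    (∃ ν : Ordinal, derivSeq f p ε ν = ∅) ∧
    bAlpha f p ε ≤ bAlpha g q δ ∧
    (BaireOne f → MReducible f g → bourgainRank f ≤ bourgainRank g) := by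
  obtain ⟨hfe, hal⟩ := alpha_main f g hg p q ε δ hδ k hk h
  refine ⟨derivSeq_mono_red f g p q ε δ k hk h, hfe, hal, fun _ hm => ?_⟩
  simp only [bourgainRank]
  refine ciSup_le' fun x => ?_
  obtain ⟨q', δ', hδ', k', hk', h'⟩ := hm x.1 x.2.1 x.2.2
  have h1 := (alpha_main f g hg x.1 q' x.2.1 δ' hδ' k' hk' h').2
  exact h1.trans (le_ciSup (Ordinal.bddAbove_range _)
    (⟨q', ⟨δ', hδ'⟩⟩ : ℚ × {ε : ℚ // 0 < ε}))
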